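/- Let M be a metric space in which closed bounded sets are compact (a proper metric space), and let x, y ∈ M be connected by some Lipschitz path p : [0,1] → M with p(0) = x, p(1) = y. Then there exists a Lipschitz path q : [0,1] → M with q(0) = x, q(1) = y whose Lipschitz constant equals the infimum k of Lipschitz constants of all such paths. -/

import Mathlib

open Set BoundedContinuousFunction

theorem stmt_11 {M : Type*} [MetricSpace M] [ProperSpace M] (x y : M)
    (hex : ∃ (p : ℝ → M) (C : ℝ), p 0 = x ∧ p 1 = y ∧
      ∀ s ∈ Set.Icc (0:ℝ) 1, ∀ t ∈ Set.Icc (0:ℝ) 1, dist (p s) (p t) ≤ C * |s - t|) :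
    ∃ q : ℝ → M, q 0 = x ∧ q 1 = y ∧
      ∀ s ∈ Set.Icc (0:ℝ) 1, ∀ t ∈ Set.Icc (0:ℝ) 1,
        dist (q s) (q t) ≤
          sInf {C : ℝ | 0 ≤ C ∧ ∃ p : ℝ → M, p 0 = x ∧ p 1 = y ∧
            ∀ s ∈ Set.Icc (0:ℝ) 1, ∀ t ∈ Set.Icc (0:ℝ) 1,
              dist (p s) (p t) ≤ C * |s - t|} * |s - t| := by
  set S : Set ℝ := {C : ℝ | 0 ≤ C ∧ ∃ p : ℝ → M, p 0 = x ∧ p 1 = y ∧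
            ∀ s ∈ Set.Icc (0:ℝ) 1, ∀ t ∈ Set.Icc (0:ℝ) 1,
              dist (p s) (p t) ≤ C * |s - t|} with hS
  set k : ℝ := sInf S with hk
  -- S is nonempty
  obtain ⟨p, C, hp0, hp1, hplip⟩ := hex
  have hC0 : 0 ≤ C := by
    have h := hplip 0 (by norm_num) 1 (by norm_num)
    have h2 := dist_nonneg (x := p 0) (y := p 1)
    norm_num at h
    linarith
  have hSne : S.Nonempty := ⟨C, hC0, p, hp0, hp1, hplip⟩
  have hk0 : 0 ≤ k := Real.sInf_nonneg fun c hc => hc.1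
  have h0I : (0:ℝ) ∈ Set.Icc (0:ℝ) 1 := by norm_num
  have h1I : (1:ℝ) ∈ Set.Icc (0:ℝ) 1 := by norm_num
  set K : ℕ → Set (↥(Set.Icc (0:ℝ) 1) →ᵇ M) := fun n =>
    {f | f ⟨0, h0I⟩ = x ∧ f ⟨1, h1I⟩ = y ∧
      ∀ s t : ↥(Set.Icc (0:ℝ) 1), dist (f s) (f t) ≤ (k + 1/(n+1)) * |(s:ℝ) - (t:ℝ)|} with hK
  have hKmono : ∀ n, K (n+1) ⊆ K n := by
    intro n f hf
    refine ⟨hf.1, hf.2.1, fun s t => (hf.2.2 s t).trans ?_⟩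
    refine mul_le_mul_of_nonneg_right (add_le_add_right ?_ k) (abs_nonneg _)
    have h1 : (0:ℝ) < (n:ℝ)+1 := by positivity
    refine one_div_le_one_div_of_le h1 ?_
    push_cast; linarith
  have hKcl : ∀ n, IsClosed (K n) := by
    intro n
    apply IsClosed.inter (isClosed_eq (continuous_eval_const _) continuous_const)
    apply IsClosed.inter (isClosed_eq (continuous_eval_const _) continuous_const)
    have heq : {f : ↥(Set.Icc (0:ℝ) 1) →ᵇ M |
        ∀ s t : ↥(Set.Icc (0:ℝ) 1), dist (f s) (f t) ≤ (k + 1/(n+1)) * |(s:ℝ) - (t:ℝ)|}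
        = ⋂ (s : ↥(Set.Icc (0:ℝ) 1)) (t : ↥(Set.Icc (0:ℝ) 1)),
          {f : ↥(Set.Icc (0:ℝ) 1) →ᵇ M | dist (f s) (f t) ≤ (k + 1/(n+1)) * |(s:ℝ) - (t:ℝ)|} := by
      ext f
      exact ⟨fun h => Set.mem_iInter.2 fun s => Set.mem_iInter.2 fun t => h s t,
        fun h s t => Set.mem_iInter.1 (Set.mem_iInter.1 h s) t⟩
    show IsClosed {f : ↥(Set.Icc (0:ℝ) 1) →ᵇ M |
        ∀ s t : ↥(Set.Icc (0:ℝ) 1), dist (f s) (f t) ≤ (k + 1/(n+1)) * |(s:ℝ) - (t:ℝ)|}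
    rw [heq]
    refine isClosed_iInter fun s => isClosed_iInter fun t => ?_
    exact isClosed_le ((continuous_eval_const s).dist (continuous_eval_const t)) continuous_const
  have hKne : ∀ n, (K n).Nonempty := by
    intro n
    obtain ⟨c, hcS, hclt⟩ := Real.lt_sInf_add_pos (ε := 1/(n+1)) hSne (by positivity)
    obtain ⟨hc0, r, hr0, hr1, hrlip⟩ := hcS
    rw [← hk] at hclt
    have hlip : LipschitzWith (Real.toNNReal c) (fun s : ↥(Set.Icc (0:ℝ) 1) => r s) := by
      apply LipschitzWith.of_dist_le_mul
      intro s t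
      rw [Real.coe_toNNReal c hc0, Subtype.dist_eq, Real.dist_eq]
      exact hrlip s s.2 t t.2
    refine ⟨mkOfCompact ⟨fun s => r s, hlip.continuous⟩, ?_, ?_, ?_⟩
    · simpa using hr0
    · simpa using hr1
    · intro s t
      refine (hrlip s s.2 t t.2).trans ?_
      exact mul_le_mul_of_nonneg_right hclt.le (abs_nonneg _)
  have hK0cpt : IsCompact (K 0) := by
    apply arzela_ascoli₂ (Metric.closedBall x (k+1)) (isCompact_closedBall x _) _ (hKcl 0)
    · intro f s hf
      have h := hf.2.2 s ⟨0, h0I⟩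
      rw [hf.1] at h
      norm_num at h
      refine Metric.mem_closedBall.2 (h.trans ?_)
      have hs1 : |(s:ℝ)| ≤ 1 := by
        rw [abs_of_nonneg s.2.1]; exact s.2.2
      calc (k + 1) * |(s:ℝ)| ≤ (k+1) * 1 :=
            mul_le_mul_of_nonneg_left hs1 (by linarith)
        _ = k+1 := mul_one _
    · apply Metric.equicontinuous_of_continuity_modulus (fun d => (k+1)*d)
      · have h := (continuous_const.mul continuous_id).tendsto (0:ℝ)
          (f := fun d : ℝ => (k+1)*d)
        simpa using h
      · rintro s t ⟨f, hf⟩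
        have h := hf.2.2 s t
        rw [Subtype.dist_eq, Real.dist_eq]
        refine h.trans (le_of_eq ?_)
        norm_num
  obtain ⟨f, hf⟩ := IsCompact.nonempty_iInter_of_sequence_nonempty_isCompact_isClosed
    K hKmono hKne hK0cpt hKcl
  simp only [Set.mem_iInter] at hf
  refine ⟨fun t => f (Set.projIcc 0 1 zero_le_one t), ?_, ?_, ?_⟩
  · show f (Set.projIcc 0 1 zero_le_one 0) = x
    rw [Set.projIcc_of_mem zero_le_one h0I]; exact (hf 0).1
  · show f (Set.projIcc 0 1 zero_le_one 1) = y
    rw [Set.projIcc_of_mem zero_le_one h1I]; exact (hf 0).2.1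
  · intro s hs t ht
    show dist (f (Set.projIcc 0 1 zero_le_one s)) (f (Set.projIcc 0 1 zero_le_one t)) ≤ k * |s - t|
    rw [Set.projIcc_of_mem zero_le_one hs, Set.projIcc_of_mem zero_le_one ht]
    have hlim : Filter.Tendsto (fun n : ℕ => (k + 1/(n+1)) * |s - t|)
        Filter.atTop (nhds (k * |s - t|)) := by
      have h1 : Filter.Tendsto (fun n : ℕ => 1/((n:ℝ)+1)) Filter.atTop (nhds 0) :=
        tendsto_one_div_add_atTop_nhds_zero_nat
      have h2 := ((tendsto_const_nhds (x := k) (f := Filter.atTop (α := ℕ))).add h1).mul_const |s - t|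
      simpa using h2
    refine ge_of_tendsto hlim (Filter.Eventually.of_forall fun n => ?_)
    exact (hf n).2.2 ⟨s, hs⟩ ⟨t, ht⟩
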